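/- Every morphism between pasting schemes (globular sets which are globular sums of disks) is injective. -/

import Mathlib

/-- A globular set, presented as a family of sets of `n`-cells with source and target maps
subject to the globular relations. -/
structure GlobSet : Type 1 where
  obj : ℕ → Type
  src : ∀ n, obj (n + 1) → obj n
  tgt : ∀ n, obj (n + 1) → obj n
  glob_ss : ∀ n (x : obj (n + 2)), src n (src (n + 1) x) = src n (tgt (n + 1) x)
  glob_tt : ∀ n (x : obj (n + 2)), tgt n (src (n + 1) x) = tgt n (tgt (n + 1) x)

/-- A morphism of globular sets. -/
@[ext]
structure GlobHom (X Y : GlobSet) : Type where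
  app : ∀ n, X.obj n → Y.obj n
  src_app : ∀ n x, app n (X.src n x) = Y.src n (app (n + 1) x)
  tgt_app : ∀ n x, app n (X.tgt n x) = Y.tgt n (app (n + 1) x)

namespace GlobSet

/-- The cells of a globular set (of all dimensions). -/
def Cell (X : GlobSet) : Type := Σ n, X.obj n

/-- One step of the relation `◁`: `s(x) ◁ x` and `x ◁ t(x)`. -/
inductive Step (X : GlobSet) : X.Cell → X.Cell → Prop
  | src (n : ℕ) (x : X.obj (n + 1)) : Step X ⟨n, X.src n x⟩ ⟨n + 1, x⟩
  | tgt (n : ℕ) (x : X.obj (n + 1)) : Step X ⟨n + 1, x⟩ ⟨n, X.tgt n x⟩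

/-- The relation `◁`: transitive closure of `s(x) ◁ x ◁ t(x)`. -/
def Rel (X : GlobSet) : X.Cell → X.Cell → Prop := Relation.TransGen (Step X)

/-- A globular set is `◁`-linear if `x ≠ y ↔ (x ◁ y ∨ y ◁ x)`. -/
def Linear (X : GlobSet) : Prop :=
  ∀ a b : X.Cell, a ≠ b ↔ (Rel X a b ∨ Rel X b a)

/-- Pasting schemes: the finite `◁`-linear globular sets
(by the Finster–Mimram characterization, these are exactly the globular sums of disks). -/
def IsPastingScheme (X : GlobSet) : Prop :=
  Finite X.Cell ∧ Linear X

end GlobSet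


/-- The map on cells induced by a globular morphism. -/
def GlobHom.cellMap {X Y : GlobSet} (f : GlobHom X Y) : X.Cell → Y.Cell :=
  fun c => ⟨c.1, f.app c.1 c.2⟩

theorem GlobHom.cellMap_step {X Y : GlobSet} (f : GlobHom X Y) {a b : X.Cell}
    (h : GlobSet.Step X a b) : GlobSet.Step Y (f.cellMap a) (f.cellMap b) := by
  cases h with
  | src n x =>
      have : f.cellMap ⟨n, X.src n x⟩ = ⟨n, Y.src n (f.app (n+1) x)⟩ := by
        simp [GlobHom.cellMap, f.src_app]
        rfl
      rw [this]
      exact GlobSet.Step.src n (f.app (n+1) x)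
  | tgt n x =>
      have : f.cellMap ⟨n, X.tgt n x⟩ = ⟨n, Y.tgt n (f.app (n+1) x)⟩ := by
        simp [GlobHom.cellMap, f.tgt_app]
        rfl
      rw [this]
      exact GlobSet.Step.tgt n (f.app (n+1) x)

theorem GlobHom.cellMap_rel {X Y : GlobSet} (f : GlobHom X Y) {a b : X.Cell}
    (h : GlobSet.Rel X a b) : GlobSet.Rel Y (f.cellMap a) (f.cellMap b) :=
by
  induction h with
  | single hs => exact Relation.TransGen.single (f.cellMap_step hs)
  | tail _ hs ih => exact Relation.TransGen.tail ih (f.cellMap_step hs)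

/-- Every morphism between pasting schemes is injective (in every dimension). -/
theorem pasting_scheme_hom_injective {X Y : GlobSet}
    (hX : X.IsPastingScheme) (hY : Y.IsPastingScheme) (f : GlobHom X Y) :
    ∀ n, Function.Injective (f.app n) := by
  intro n a b hab
  by_contra hne
  have hcell : (⟨n, a⟩ : X.Cell) ≠ ⟨n, b⟩ := by
    intro h
    exact hne (eq_of_heq (Sigma.mk.inj_iff.mp h).2)
  have hFeq : f.cellMap ⟨n, a⟩ = f.cellMap ⟨n, b⟩ := by
    simp [GlobHom.cellMap, hab]
    rfl
  have hrel := (hX.2 _ _).mp hcell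
  have hloop : GlobSet.Rel Y (f.cellMap ⟨n, a⟩) (f.cellMap ⟨n, a⟩) := by
    rcases hrel with h | h
    · have := f.cellMap_rel h
      rwa [hFeq] at this ⊢
    · have := f.cellMap_rel h
      rwa [← hFeq] at this
  exact (hY.2 _ _).mpr (Or.inl hloop) rfl
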